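/- arXiv:1511.07036 — 2 statements merged into one kernel-verified Lean document; each statement's English description precedes it below -/
import Mathlib

section
/- A probability distribution on a bounded interval [a, b] of the real line is uniquely determined by its sequence of moments: if two probability measures supported on [a, b] have equal r-th moments for all nonnegative integers r, then they are equal. -/
open MeasureTheory

/-- Any measurable function bounded a.e. w.r.t. a finite measure is integrable. -/
lemma aux_integrable {μ : Measure ℝ} [IsFiniteMeasure μ] {g : ℝ → ℝ} (hg : Continuous g)
    {C : ℝ} (hC : ∀ᵐ x ∂μ, |g x| ≤ C) : Integrable g μ :=
  Integrable.mono' (integrable_const C) hg.aestronglyMeasurable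
    (hC.mono fun x hx => by simpa [Real.norm_eq_abs] using hx)

/-- Polynomial integrals agree if moments agree. -/
lemma aux_poly (a b : ℝ) (μ ν : Measure ℝ)
    [IsProbabilityMeasure μ] [IsProbabilityMeasure ν]
    (hμ : μ (Set.Icc a b)ᶜ = 0) (hν : ν (Set.Icc a b)ᶜ = 0)
    (h : ∀ r : ℕ, ∫ x, x ^ r ∂μ = ∫ x, x ^ r ∂ν) (p : Polynomial ℝ) :
    ∫ x, p.eval x ∂μ = ∫ x, p.eval x ∂ν := by
  have haeμ : ∀ᵐ x ∂μ, x ∈ Set.Icc a b := by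
    rw [ae_iff]; exact hμ
  have haeν : ∀ᵐ x ∂ν, x ∈ Set.Icc a b := by
    rw [ae_iff]; exact hν
  have key : ∀ (κ : Measure ℝ), IsProbabilityMeasure κ → (∀ᵐ x ∂κ, x ∈ Set.Icc a b) →
      ∫ x, p.eval x ∂κ =
        ∑ i ∈ Finset.range (p.natDegree + 1), p.coeff i * ∫ x, x ^ i ∂κ := by
    intro κ hκ hae
    have hint : ∀ i : ℕ, Integrable (fun x : ℝ => x ^ i) κ := by
      intro i
      obtain ⟨C, hC⟩ := (isCompact_Icc (a := a) (b := b)).exists_bound_of_continuousOn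
        (continuous_pow i).continuousOn
      refine aux_integrable (continuous_pow i) (C := C) ?_
      filter_upwards [hae] with x hx
      simpa [Real.norm_eq_abs] using hC x hx
    calc ∫ x, p.eval x ∂κ
        = ∫ x, ∑ i ∈ Finset.range (p.natDegree + 1), p.coeff i * x ^ i ∂κ := by
          exact integral_congr_ae (Filter.Eventually.of_forall fun x => p.eval_eq_sum_range x)
      _ = ∑ i ∈ Finset.range (p.natDegree + 1), ∫ x, p.coeff i * x ^ i ∂κ := by
          refine integral_finset_sum _ fun i _ => (hint i).const_mul _
      _ = ∑ i ∈ Finset.range (p.natDegree + 1), p.coeff i * ∫ x, x ^ i ∂κ := by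
          simp [integral_const_mul]
  rw [key μ ‹_› haeμ, key ν ‹_› haeν]
  simp_rw [h]

/-- Integrals of continuous functions agree. -/
lemma aux_cont (a b : ℝ) (μ ν : Measure ℝ)
    [IsProbabilityMeasure μ] [IsProbabilityMeasure ν]
    (hμ : μ (Set.Icc a b)ᶜ = 0) (hν : ν (Set.Icc a b)ᶜ = 0)
    (h : ∀ r : ℕ, ∫ x, x ^ r ∂μ = ∫ x, x ^ r ∂ν) (g : ℝ → ℝ) (hg : Continuous g) :
    ∫ x, g x ∂μ = ∫ x, g x ∂ν := by
  have haeμ : ∀ᵐ x ∂μ, x ∈ Set.Icc a b := by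
    rw [ae_iff]; exact hμ
  have haeν : ∀ᵐ x ∂ν, x ∈ Set.Icc a b := by
    rw [ae_iff]; exact hν
  -- integrability of g and of polynomials
  obtain ⟨C, hC⟩ := (isCompact_Icc (a := a) (b := b)).exists_bound_of_continuousOn
    hg.continuousOn
  have hgC : ∀ᵐ x ∂μ, |g x| ≤ C := by
    filter_upwards [haeμ] with x hx; simpa [Real.norm_eq_abs] using hC x hx
  have hgCν : ∀ᵐ x ∂ν, |g x| ≤ C := by
    filter_upwards [haeν] with x hx; simpa [Real.norm_eq_abs] using hC x hx
  have hgμ : Integrable g μ := aux_integrable hg hgC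
  have hgν : Integrable g ν := aux_integrable hg hgCν
  -- it suffices to show the difference is less than every ε
  have key : ∀ ε : ℝ, 0 < ε → |∫ x, g x ∂μ - ∫ x, g x ∂ν| < ε := by
    intro ε hε
    obtain ⟨p, hp⟩ := exists_polynomial_near_of_continuousOn a b g hg.continuousOn (ε / 3)
      (by linarith)
    have hpcont : Continuous fun x : ℝ => p.eval x := p.continuous_aeval
    obtain ⟨D, hD⟩ := (isCompact_Icc (a := a) (b := b)).exists_bound_of_continuousOn
      hpcont.continuousOn
    have hpμ : Integrable (fun x => p.eval x) μ := by
      refine aux_integrable hpcont (C := D) ?_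
      filter_upwards [haeμ] with x hx; simpa [Real.norm_eq_abs] using hD x hx
    have hpν : Integrable (fun x => p.eval x) ν := by
      refine aux_integrable hpcont (C := D) ?_
      filter_upwards [haeν] with x hx; simpa [Real.norm_eq_abs] using hD x hx
    have h1 : |∫ x, g x ∂μ - ∫ x, p.eval x ∂μ| ≤ ε / 3 := by
      rw [← integral_sub hgμ hpμ]
      rw [← Real.norm_eq_abs]
      refine le_trans (norm_integral_le_integral_norm _) ?_
      simp only [Real.norm_eq_abs]
      calc ∫ x, |g x - p.eval x| ∂μ ≤ ∫ _, ε / 3 ∂μ := by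
            refine integral_mono_ae ((hgμ.sub hpμ).abs) (integrable_const _) ?_
            filter_upwards [haeμ] with x hx
            rw [abs_sub_comm]
            exact (hp x hx).le
        _ = ε / 3 := by simp
    have h2 : |∫ x, g x ∂ν - ∫ x, p.eval x ∂ν| ≤ ε / 3 := by
      rw [← integral_sub hgν hpν]
      rw [← Real.norm_eq_abs]
      refine le_trans (norm_integral_le_integral_norm _) ?_
      simp only [Real.norm_eq_abs]
      calc ∫ x, |g x - p.eval x| ∂ν ≤ ∫ _, ε / 3 ∂ν := by
            refine integral_mono_ae ((hgν.sub hpν).abs) (integrable_const _) ?_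
            filter_upwards [haeν] with x hx
            rw [abs_sub_comm]
            exact (hp x hx).le
        _ = ε / 3 := by simp
    have h3 : ∫ x, p.eval x ∂μ = ∫ x, p.eval x ∂ν := aux_poly a b μ ν hμ hν h p
    calc |∫ x, g x ∂μ - ∫ x, g x ∂ν|
        ≤ |∫ x, g x ∂μ - ∫ x, p.eval x ∂μ| + |∫ x, p.eval x ∂ν - ∫ x, g x ∂ν| := by
          rw [h3]
          have := abs_sub_abs_le_abs_sub (∫ x, g x ∂μ - ∫ x, g x ∂ν) 0
          calc |∫ x, g x ∂μ - ∫ x, g x ∂ν|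
              = |(∫ x, g x ∂μ - ∫ x, p.eval x ∂ν) + (∫ x, p.eval x ∂ν - ∫ x, g x ∂ν)| := by
                ring_nf
            _ ≤ _ := abs_add_le _ _
      _ ≤ ε / 3 + ε / 3 :=
          add_le_add h1 (by rw [abs_sub_comm]; exact h2)
      _ < ε := by linarith
  by_contra hne
  have h0 : 0 < |∫ x, g x ∂μ - ∫ x, g x ∂ν| := by
    rw [abs_pos, sub_ne_zero]; exact hne
  exact absurd (key _ h0) (lt_irrefl _)

/-- A probability measure supported on a bounded interval `[a, b]` is uniquely
determined by its moments. -/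
theorem stmt_9 (a b : ℝ) (μ ν : Measure ℝ)
    [IsProbabilityMeasure μ] [IsProbabilityMeasure ν]
    (hμ : μ (Set.Icc a b)ᶜ = 0) (hν : ν (Set.Icc a b)ᶜ = 0)
    (h : ∀ r : ℕ, ∫ x, x ^ r ∂μ = ∫ x, x ^ r ∂ν) :
    μ = ν := by
  apply ext_of_forall_lintegral_eq_of_IsFiniteMeasure
  intro f
  have hf : Continuous fun x : ℝ => (f x : ℝ) := NNReal.continuous_coe.comp f.continuous
  obtain ⟨C, hC⟩ := f.bounded
  have hb : ∀ x : ℝ, |(f x : ℝ)| ≤ C + (f 0 : ℝ) := by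
    intro x
    rw [abs_of_nonneg (NNReal.coe_nonneg _)]
    have h1 := hC x 0
    rw [NNReal.dist_eq] at h1
    have := abs_sub_abs_le_abs_sub ((f x : ℝ)) ((f 0 : ℝ))
    rw [abs_of_nonneg (NNReal.coe_nonneg _), abs_of_nonneg (NNReal.coe_nonneg _)] at this
    linarith
  have hiμ : Integrable (fun x : ℝ => (f x : ℝ)) μ :=
    aux_integrable hf (Filter.Eventually.of_forall hb)
  have hiν : Integrable (fun x : ℝ => (f x : ℝ)) ν :=
    aux_integrable hf (Filter.Eventually.of_forall hb)
  rw [lintegral_coe_eq_integral _ hiμ, lintegral_coe_eq_integral _ hiν,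
    aux_cont a b μ ν hμ hν h _ hf]
end

section
/- Let (R_1,…,R_n) be Dirichlet D_n(1,…,1), and let X_1,…,X_n and Y_1,…,Y_n each be families of i.i.d. random variables supported in [0,1], both independent of (R_1,…,R_n). If Σ R_i X_i and Σ R_i Y_i have the same distribution, then X_1 and Y_1 have the same distribution. -/
open MeasureTheory ProbabilityTheory

def stdSimplexSet (n : ℕ) : Set (Fin n → ℝ) :=
  {r | (∀ i, 0 ≤ r i) ∧ ∑ i, r i = 1}

/-- Dirichlet `D_n(1,…,1)`: uniform probability on the standard simplex. -/
noncomputable def dirichletOne (n : ℕ) : Measure (Fin n → ℝ) :=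
  (μH[(n : ℝ) - 1] (stdSimplexSet n))⁻¹ • (μH[(n : ℝ) - 1]).restrict (stdSimplexSet n)

section AuxHelpers

set_option linter.unusedSectionVars false

variable {Ω : Type*} [MeasurableSpace Ω] {μ : Measure Ω} [IsProbabilityMeasure μ]

lemma aux_int_pow (ν : Measure ℝ) [IsProbabilityMeasure ν]
    (h : ∀ᵐ x ∂ν, x ∈ Set.Icc (0:ℝ) 1) (k : ℕ) : Integrable (fun x => x ^ k) ν := by
  refine (integrable_const (1:ℝ)).mono' (measurable_id.pow_const k).aestronglyMeasurable ?_
  filter_upwards [h] with x hx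
  rw [Real.norm_eq_abs, abs_of_nonneg (pow_nonneg hx.1 k)]
  exact pow_le_one₀ hx.1 hx.2

lemma aux_determined (ν₁ ν₂ : Measure ℝ) [IsProbabilityMeasure ν₁] [IsProbabilityMeasure ν₂]
    (h₁ : ∀ᵐ x ∂ν₁, x ∈ Set.Icc (0:ℝ) 1) (h₂ : ∀ᵐ x ∂ν₂, x ∈ Set.Icc (0:ℝ) 1)
    (hmom : ∀ k : ℕ, ∫ x, x ^ k ∂ν₁ = ∫ x, x ^ k ∂ν₂) : ν₁ = ν₂ := by
  have hpoly : ∀ p : Polynomial ℝ, ∫ x, p.eval x ∂ν₁ = ∫ x, p.eval x ∂ν₂ := by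
    intro p
    have hev : ∀ x : ℝ, p.eval x = ∑ i ∈ Finset.range (p.natDegree + 1), p.coeff i * x ^ i := by
      intro x
      rw [Polynomial.eval_eq_sum_range]
    simp_rw [hev]
    rw [integral_finset_sum _ (fun i _ => (aux_int_pow ν₁ h₁ i).const_mul _),
      integral_finset_sum _ (fun i _ => (aux_int_pow ν₂ h₂ i).const_mul _)]
    refine Finset.sum_congr rfl fun i _ => ?_
    rw [integral_const_mul, integral_const_mul, hmom i]
  -- integrals of bounded continuous real functions agree
  have hcont : ∀ f : ℝ → ℝ, Continuous f → ∫ x, f x ∂ν₁ = ∫ x, f x ∂ν₂ := by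
    intro f hf
    have hfi : ∀ (ν : Measure ℝ), IsProbabilityMeasure ν → (∀ᵐ x ∂ν, x ∈ Set.Icc (0:ℝ) 1) →
        ∀ g : ℝ → ℝ, Continuous g → Integrable (fun x => g x) ν := by
      intro ν _ hν g hg
      obtain ⟨C, hC⟩ := (isCompact_Icc (a := (0:ℝ)) (b := 1)).exists_bound_of_continuousOn
        hg.continuousOn
      refine (integrable_const C).mono' hg.measurable.aestronglyMeasurable ?_
      filter_upwards [hν] with x hx using hC x hx
    have key : ∀ ε : ℝ, 0 < ε → |∫ x, f x ∂ν₁ - ∫ x, f x ∂ν₂| ≤ 2 * ε := by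
      intro ε hε
      -- polynomial approximation on Icc 0 1
      set F : C(Set.Icc (0:ℝ) 1, ℝ) := ⟨fun x => f x, hf.comp continuous_subtype_val⟩ with hF
      have hFmem : F ∈ (polynomialFunctions (Set.Icc (0:ℝ) 1)).topologicalClosure := by
        rw [polynomialFunctions_closure_eq_top]; trivial
      have hFcl : F ∈ closure ((polynomialFunctions (Set.Icc (0:ℝ) 1)) : Set C(Set.Icc (0:ℝ) 1, ℝ)) := hFmem
      rw [Metric.mem_closure_iff] at hFcl
      obtain ⟨G, hG, hdist⟩ := hFcl ε hε
      rw [polynomialFunctions_coe] at hG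
      obtain ⟨p, hp⟩ := hG
      -- pointwise bound on Icc
      have hbound : ∀ x ∈ Set.Icc (0:ℝ) 1, |f x - p.eval x| ≤ ε := by
        intro x hx
        have h1 : dist (F ⟨x, hx⟩) (G ⟨x, hx⟩) ≤ dist F G := ContinuousMap.dist_apply_le_dist _
        have h2 : G ⟨x, hx⟩ = p.eval x := by rw [← hp]; rfl
        have h3 : F ⟨x, hx⟩ = f x := rfl
        rw [h2, h3, Real.dist_eq] at h1
        exact h1.trans hdist.le
      have hkey : ∀ (ν : Measure ℝ), IsProbabilityMeasure ν → (∀ᵐ x ∂ν, x ∈ Set.Icc (0:ℝ) 1) →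
          |∫ x, f x ∂ν - ∫ x, p.eval x ∂ν| ≤ ε := by
        intro ν hpν hν
        rw [← integral_sub (hfi ν hpν hν f hf) (hfi ν hpν hν _ p.continuous)]
        have := norm_integral_le_of_norm_le_const (μ := ν)
          (f := fun x => f x - p.eval x) (C := ε) ?_
        · simpa using this
        · filter_upwards [hν] with x hx
          rw [Real.norm_eq_abs]; exact hbound x hx
      have e1 := hkey ν₁ ‹_› h₁
      have e2 := hkey ν₂ ‹_› h₂
      have e3 := hpoly p
      have : |∫ x, f x ∂ν₁ - ∫ x, f x ∂ν₂| ≤ |∫ x, f x ∂ν₁ - ∫ x, p.eval x ∂ν₁| + |∫ x, f x ∂ν₂ - ∫ x, p.eval x ∂ν₂| := by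
        rw [e3] at *
        have := abs_sub (∫ x, f x ∂ν₁ - ∫ x, Polynomial.eval x p ∂ν₂) (∫ x, f x ∂ν₂ - ∫ x, Polynomial.eval x p ∂ν₂)
        calc |∫ x, f x ∂ν₁ - ∫ x, f x ∂ν₂| = |(∫ x, f x ∂ν₁ - ∫ x, Polynomial.eval x p ∂ν₂) - (∫ x, f x ∂ν₂ - ∫ x, Polynomial.eval x p ∂ν₂)| := by ring_nf
          _ ≤ _ := abs_sub _ _
      linarith
    by_contra hne
    have hd : 0 < |∫ x, f x ∂ν₁ - ∫ x, f x ∂ν₂| := abs_pos.2 (sub_ne_zero.2 hne)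
    have := key (|∫ x, f x ∂ν₁ - ∫ x, f x ∂ν₂| / 4) (by linarith)
    linarith
  refine ext_of_forall_lintegral_eq_of_IsFiniteMeasure fun f => ?_
  have hfc : Continuous fun x : ℝ => (f x : ℝ) := NNReal.continuous_coe.comp f.continuous
  have hfi : ∀ (ν : Measure ℝ), IsFiniteMeasure ν → Integrable (fun x => (f x : ℝ)) ν := by
    intro ν _
    obtain ⟨C, hC⟩ := f.bounded
    refine (integrable_const (C + (f 0 : ℝ))).mono' hfc.measurable.aestronglyMeasurable ?_
    filter_upwards with x
    have h1 : dist (f x) (f 0) ≤ C := hC x 0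
    rw [NNReal.dist_eq] at h1
    have h2 : (f x : ℝ) - (f 0 : ℝ) ≤ C := (le_abs_self _).trans h1
    have h3 : ‖(f x : ℝ)‖ = (f x : ℝ) := by rw [Real.norm_eq_abs, abs_of_nonneg (f x).coe_nonneg]
    rw [h3]; linarith
  rw [lintegral_coe_eq_integral f (hfi ν₁ inferInstance), lintegral_coe_eq_integral f (hfi ν₂ inferInstance),
    hcont _ hfc]



variable {Ω : Type*} [MeasurableSpace Ω] {μ : Measure Ω} [IsProbabilityMeasure μ]

lemma aux_integrable_s16 {g : Ω → ℝ} (hm : AEStronglyMeasurable g μ)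
    (hb : ∀ᵐ ω ∂μ, g ω ∈ Set.Icc (0:ℝ) 1) : Integrable g μ := by
  refine (integrable_const (1:ℝ)).mono' hm ?_
  filter_upwards [hb] with ω h
  rw [Real.norm_eq_abs, abs_of_nonneg h.1]; exact h.2

lemma aux_prod_mem {ι : Type*} (s : Finset ι) (h : ι → ℝ)
    (hh : ∀ i ∈ s, h i ∈ Set.Icc (0:ℝ) 1) : (∏ i ∈ s, h i) ∈ Set.Icc (0:ℝ) 1 :=
  ⟨Finset.prod_nonneg fun i hi => (hh i hi).1,
   Finset.prod_le_one (fun i hi => (hh i hi).1) (fun i hi => (hh i hi).2)⟩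

lemma aux_integral_prod {n : ℕ} (g : Fin n → Ω → ℝ) (hmeas : ∀ i, Measurable (g i))
    (hindep : iIndepFun g μ)
    (hb : ∀ i, ∀ᵐ ω ∂μ, g i ω ∈ Set.Icc (0:ℝ) 1) (s : Finset (Fin n)) :
    ∫ ω, ∏ i ∈ s, g i ω ∂μ = ∏ i ∈ s, ∫ ω, g i ω ∂μ := by
  classical
  have hball : ∀ᵐ ω ∂μ, ∀ i, g i ω ∈ Set.Icc (0:ℝ) 1 := ae_all_iff.2 hb
  have hint : ∀ t : Finset (Fin n), Integrable (fun ω => ∏ i ∈ t, g i ω) μ := by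
    intro t
    refine aux_integrable_s16 (Finset.aestronglyMeasurable_fun_prod _
      (fun i _ => (hmeas i).aestronglyMeasurable)) ?_
    filter_upwards [hball] with ω h using aux_prod_mem t _ (fun i _ => h i)
  induction s using Finset.induction_on with
  | empty => simp
  | @insert a s ha ih =>
    have hIndep : IndepFun (∏ j ∈ s, g j) (g a) μ :=
      hindep.indepFun_finsetProd_of_notMem hmeas ha
    have hfun : (∏ j ∈ s, g j) = fun ω => ∏ j ∈ s, g j ω := by
      funext ω; exact Finset.prod_apply ω s g
    rw [hfun] at hIndep
    have := hIndep.integral_fun_mul_eq_mul_integral (hint s).aestronglyMeasurable (aux_integrable_s16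
      (hmeas a).aestronglyMeasurable (hb a)).aestronglyMeasurable
    rw [Finset.prod_insert ha]
    have hre : (fun ω => ∏ i ∈ insert a s, g i ω) = fun ω => g a ω * ∏ i ∈ s, g i ω := by
      funext ω; rw [Finset.prod_insert ha]
    rw [show (∫ ω, ∏ i ∈ insert a s, g i ω ∂μ) = ∫ ω, g a ω * ∏ i ∈ s, g i ω ∂μ from by rw [hre], ← ih]
    calc ∫ ω, g a ω * ∏ i ∈ s, g i ω ∂μ
        = ∫ ω, (∏ i ∈ s, g i ω) * g a ω ∂μ := by congr 1; funext ω; ring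
      _ = (∫ ω, ∏ i ∈ s, g i ω ∂μ) * ∫ ω, g a ω ∂μ := this
      _ = _ := by ring

lemma aux_expansion {n : ℕ} (hn : 1 ≤ n) (R : Ω → Fin n → ℝ) (hRmeas : Measurable R)
    (hR01 : ∀ᵐ ω ∂μ, ∀ i, R ω i ∈ Set.Icc (0:ℝ) 1)
    (Z : Fin n → Ω → ℝ) (hZmeas : ∀ i, Measurable (Z i))
    (hZindep : iIndepFun Z μ)
    (hZiid : ∀ i j, Measure.map (Z i) μ = Measure.map (Z j) μ)
    (hZbdd : ∀ i, ∀ᵐ ω ∂μ, Z i ω ∈ Set.Icc (0:ℝ) 1)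
    (hRZ : IndepFun R (fun ω i => Z i ω) μ) (r : ℕ) :
    ∫ ω, (∑ i, R ω i * Z i ω) ^ r ∂μ
      = ∑ f : Fin r → Fin n, (∫ ω, ∏ j, R ω (f j) ∂μ) *
          ∏ i, (∫ ω, Z ⟨0, hn⟩ ω ^ (Finset.univ.filter (fun j => f j = i)).card ∂μ) := by
  classical
  have hZball : ∀ᵐ ω ∂μ, ∀ i, Z i ω ∈ Set.Icc (0:ℝ) 1 := ae_all_iff.2 hZbdd
  -- pointwise expansion
  have hpt : ∀ ω, (∑ i, R ω i * Z i ω) ^ r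
      = ∑ f : Fin r → Fin n, (∏ j, R ω (f j)) * (∏ j, Z (f j) ω) := by
    intro ω
    rw [Fintype.sum_pow]
    exact Finset.sum_congr rfl fun f _ => by rw [← Finset.prod_mul_distrib]
  have hRj : ∀ i, Measurable fun ω => R ω i := fun i => (measurable_pi_apply i).comp hRmeas
  have hintf : ∀ f : Fin r → Fin n,
      Integrable (fun ω => (∏ j, R ω (f j)) * (∏ j, Z (f j) ω)) μ := by
    intro f
    refine aux_integrable_s16 ?_ ?_
    · exact ((Finset.measurable_prod Finset.univ (fun j _ => hRj (f j))).mul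
        (Finset.measurable_prod Finset.univ (fun j _ => hZmeas (f j)))).aestronglyMeasurable
    · filter_upwards [hR01, hZball] with ω h1 h2
      have p1 := aux_prod_mem Finset.univ (fun j => R ω (f j)) (fun j _ => h1 (f j))
      have p2 := aux_prod_mem Finset.univ (fun j => Z (f j) ω) (fun j _ => h2 (f j))
      exact ⟨mul_nonneg p1.1 p2.1, mul_le_one₀ p1.2 p2.1 p2.2⟩
  have step1 : ∫ ω, (∑ i, R ω i * Z i ω) ^ r ∂μ
      = ∑ f : Fin r → Fin n, ∫ ω, (∏ j, R ω (f j)) * (∏ j, Z (f j) ω) ∂μ := by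
    simp_rw [hpt]
    exact integral_finset_sum _ fun f _ => hintf f
  rw [step1]
  refine Finset.sum_congr rfl fun f _ => ?_
  -- split by independence of R and Z-vector
  have hsplit : ∫ ω, (∏ j, R ω (f j)) * (∏ j, Z (f j) ω) ∂μ
      = (∫ ω, ∏ j, R ω (f j) ∂μ) * ∫ ω, ∏ j, Z (f j) ω ∂μ := by
    have hφ : Measurable fun v : Fin n → ℝ => ∏ j : Fin r, v (f j) :=
      Finset.measurable_prod Finset.univ (fun j _ => measurable_pi_apply (f j))
    have hI : IndepFun (fun ω => ∏ j : Fin r, R ω (f j))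
        (fun ω => ∏ j : Fin r, Z (f j) ω) μ := hRZ.comp hφ hφ
    refine hI.integral_fun_mul_eq_mul_integral (Integrable.aestronglyMeasurable ?_) (Integrable.aestronglyMeasurable ?_)
    · refine aux_integrable_s16 (Finset.measurable_prod Finset.univ
        (fun j _ => hRj (f j))).aestronglyMeasurable ?_
      filter_upwards [hR01] with ω h1 using aux_prod_mem _ _ (fun j _ => h1 (f j))
    · refine aux_integrable_s16 (Finset.measurable_prod Finset.univ
        (fun j _ => hZmeas (f j))).aestronglyMeasurable ?_
      filter_upwards [hZball] with ω h2 using aux_prod_mem _ _ (fun j _ => h2 (f j))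
  rw [hsplit]
  congr 1
  -- regroup the Z-product by fibers
  have hfib : ∀ ω, (∏ j, Z (f j) ω)
      = ∏ i, Z i ω ^ (Finset.univ.filter (fun j => f j = i)).card := by
    intro ω
    have := Finset.prod_fiberwise_eq_prod_filter' Finset.univ Finset.univ f (fun i => Z i ω)
    simp only [Finset.mem_univ, Finset.filter_true] at this
    rw [← this]
    exact Finset.prod_congr rfl fun i _ => Finset.prod_const _
  simp_rw [hfib]
  -- product of independent factors
  have hpow : ∀ (k : Fin n → ℕ), ∫ ω, ∏ i, Z i ω ^ k i ∂μ = ∏ i, ∫ ω, Z i ω ^ k i ∂μ := by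
    intro k
    refine aux_integral_prod (fun i ω => Z i ω ^ k i) (fun i => (hZmeas i).pow_const (k i))
      (hZindep.comp (fun i => (·  ^ k i)) (fun i => measurable_id.pow_const (k i))) ?_ Finset.univ
    intro i
    filter_upwards [hZbdd i] with ω h using ⟨pow_nonneg h.1 _, pow_le_one₀ h.1 h.2⟩
  rw [hpow]
  refine Finset.prod_congr rfl fun i _ => ?_
  -- identical distribution
  have h1 : ∫ ω, Z i ω ^ (Finset.univ.filter (fun j => f j = i)).card ∂μ
      = ∫ x, x ^ (Finset.univ.filter (fun j => f j = i)).card ∂(Measure.map (Z i) μ) := by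
    exact (integral_map (hZmeas i).aemeasurable
      (measurable_id.pow_const _).aestronglyMeasurable).symm
  have h2 : ∫ ω, Z ⟨0, hn⟩ ω ^ (Finset.univ.filter (fun j => f j = i)).card ∂μ
      = ∫ x, x ^ (Finset.univ.filter (fun j => f j = i)).card ∂(Measure.map (Z ⟨0, hn⟩) μ) := by
    exact (integral_map (hZmeas _).aemeasurable
      (measurable_id.pow_const _).aestronglyMeasurable).symm
  rw [h1, h2, hZiid i ⟨0, hn⟩]

lemma aux_simplex_meas (n : ℕ) : MeasurableSet (stdSimplexSet n) := by
  have : stdSimplexSet n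
      = (⋂ i, (fun r : Fin n → ℝ => r i) ⁻¹' Set.Ici 0) ∩ ((fun r : Fin n → ℝ => ∑ i, r i) ⁻¹' {1}) := by
    ext r; simp [stdSimplexSet, Set.mem_iInter]
  rw [this]
  exact (MeasurableSet.iInter fun i => (measurable_pi_apply i) measurableSet_Ici).inter
    ((Finset.measurable_sum Finset.univ fun i _ => measurable_pi_apply i) (measurableSet_singleton 1))

lemma aux_R_ae {n : ℕ} (R : Ω → Fin n → ℝ) (hRmeas : Measurable R)
    (hRlaw : Measure.map R μ = dirichletOne n) : ∀ᵐ ω ∂μ, R ω ∈ stdSimplexSet n := by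
  have hS := aux_simplex_meas n
  have hzero : Measure.map R μ (stdSimplexSet n)ᶜ = 0 := by
    rw [hRlaw, dirichletOne, Measure.smul_apply, Measure.restrict_apply hS.compl,
      Set.compl_inter_self, measure_empty, smul_zero]
  have hmap : ∀ᵐ y ∂(Measure.map R μ), y ∈ stdSimplexSet n := by
    rw [MeasureTheory.ae_iff]
    exact hzero
  exact (ae_map_iff hRmeas.aemeasurable hS).1 hmap

lemma aux_R01 {n : ℕ} {R : Ω → Fin n → ℝ} (hRae : ∀ᵐ ω ∂μ, R ω ∈ stdSimplexSet n) :
    ∀ᵐ ω ∂μ, ∀ i, R ω i ∈ Set.Icc (0:ℝ) 1 := by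
  filter_upwards [hRae] with ω hω i
  refine ⟨hω.1 i, ?_⟩
  calc R ω i ≤ ∑ j, R ω j := Finset.single_le_sum (fun j _ => hω.1 j) (Finset.mem_univ i)
    _ = 1 := hω.2

lemma aux_R_pos {n : ℕ} (hn : 1 ≤ n) {R : Ω → Fin n → ℝ} (hRmeas : Measurable R)
    (hRae : ∀ᵐ ω ∂μ, R ω ∈ stdSimplexSet n) (r : ℕ) :
    0 < ∑ i, ∫ ω, R ω i ^ r ∂μ := by
  have hn0 : (0:ℝ) < n := by exact_mod_cast hn
  have hRj : ∀ i, Measurable fun ω => R ω i := fun i => (measurable_pi_apply i).comp hRmeas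
  have h01 := aux_R01 (μ := μ) hRae
  have hlow : ∀ᵐ ω ∂μ, ((1:ℝ)/n)^r ≤ ∑ i, R ω i ^ r := by
    filter_upwards [hRae] with ω hω
    obtain ⟨h0, h1⟩ := hω
    by_cases hex : ∃ i, (1:ℝ)/n ≤ R ω i
    · obtain ⟨i, hi⟩ := hex
      calc ((1:ℝ)/n)^r ≤ R ω i ^ r := pow_le_pow_left₀ (by positivity) hi r
        _ ≤ ∑ j, R ω j ^ r :=
          Finset.single_le_sum (fun j _ => pow_nonneg (h0 j) r) (Finset.mem_univ i)
    · push_neg at hex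
      exfalso
      have hne : (Finset.univ : Finset (Fin n)).Nonempty := ⟨⟨0, hn⟩, Finset.mem_univ _⟩
      have hlt : (∑ i, R ω i) < ∑ _i : Fin n, (1:ℝ)/n :=
        Finset.sum_lt_sum_of_nonempty hne fun i _ => hex i
      rw [h1, Finset.sum_const, Finset.card_univ, Fintype.card_fin, nsmul_eq_mul] at hlt
      have : (n:ℝ) * (1/n) = 1 := by field_simp
      rw [this] at hlt
      exact lt_irrefl _ hlt
  have hint : ∀ i, Integrable (fun ω => R ω i ^ r) μ := by
    intro i
    refine aux_integrable_s16 ((hRj i).pow_const r).aestronglyMeasurable ?_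
    filter_upwards [h01] with ω h using ⟨pow_nonneg (h i).1 _, pow_le_one₀ (h i).1 (h i).2⟩
  have hsum_int : Integrable (fun ω => ∑ i, R ω i ^ r) μ :=
    integrable_finset_sum _ fun i _ => hint i
  have hmono := integral_mono_ae (integrable_const (((1:ℝ)/n)^r)) hsum_int hlow
  rw [integral_const, probReal_univ, smul_eq_mul, one_mul] at hmono
  calc (0:ℝ) < ((1:ℝ)/n)^r := by positivity
    _ ≤ ∫ ω, ∑ i, R ω i ^ r ∂μ := hmono
    _ = ∑ i, ∫ ω, R ω i ^ r ∂μ := integral_finset_sum _ fun i _ => hint i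
end AuxHelpers

/-- If `Σ Rᵢ Xᵢ` and `Σ Rᵢ Yᵢ` have the same distribution, where the `Xᵢ` (resp. `Yᵢ`)
are i.i.d. supported in `[0,1]` and independent of the Dirichlet vector `R`, then
`X₁` and `Y₁` have the same distribution. -/
theorem stmt_16 {Ω : Type*} [MeasurableSpace Ω] (μ : Measure Ω) [IsProbabilityMeasure μ]
    (n : ℕ) (hn : 1 ≤ n)
    (R : Ω → Fin n → ℝ) (hRmeas : Measurable R)
    (hRlaw : Measure.map R μ = dirichletOne n)
    (X Y : Fin n → Ω → ℝ) (hXmeas : ∀ i, Measurable (X i)) (hYmeas : ∀ i, Measurable (Y i))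
    (hXindep : iIndepFun X μ)
    (hYindep : iIndepFun Y μ)
    (hXiid : ∀ i j, Measure.map (X i) μ = Measure.map (X j) μ)
    (hYiid : ∀ i j, Measure.map (Y i) μ = Measure.map (Y j) μ)
    (hXbdd : ∀ i, ∀ᵐ ω ∂μ, X i ω ∈ Set.Icc (0 : ℝ) 1)
    (hYbdd : ∀ i, ∀ᵐ ω ∂μ, Y i ω ∈ Set.Icc (0 : ℝ) 1)
    (hRX : IndepFun R (fun ω i => X i ω) μ)
    (hRY : IndepFun R (fun ω i => Y i ω) μ)
    (hSeq : Measure.map (fun ω => ∑ i, R ω i * X i ω) μ =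
        Measure.map (fun ω => ∑ i, R ω i * Y i ω) μ) :
    ∀ i, Measure.map (X i) μ = Measure.map (Y i) μ := by
  classical
  have hRae := aux_R_ae (μ := μ) R hRmeas hRlaw
  have hR01 := aux_R01 (μ := μ) hRae
  have hRj : ∀ i, Measurable fun ω => R ω i := fun i => (measurable_pi_apply i).comp hRmeas
  have hmom : ∀ r : ℕ, ∫ ω, X ⟨0, hn⟩ ω ^ r ∂μ = ∫ ω, Y ⟨0, hn⟩ ω ^ r ∂μ := by
    intro r
    induction r using Nat.strong_induction_on with
    | _ r ih =>
    rcases Nat.eq_zero_or_pos r with hr0 | hrpos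
    · subst hr0; simp
    have hSX : Measurable fun ω => ∑ i, R ω i * X i ω :=
      Finset.measurable_sum _ fun i _ => (hRj i).mul (hXmeas i)
    have hSY : Measurable fun ω => ∑ i, R ω i * Y i ω :=
      Finset.measurable_sum _ fun i _ => (hRj i).mul (hYmeas i)
    have hE : ∫ ω, (∑ i, R ω i * X i ω) ^ r ∂μ = ∫ ω, (∑ i, R ω i * Y i ω) ^ r ∂μ := by
      calc ∫ ω, (∑ i, R ω i * X i ω) ^ r ∂μ
          = ∫ x, x ^ r ∂(Measure.map (fun ω => ∑ i, R ω i * X i ω) μ) :=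
            (integral_map hSX.aemeasurable
              (measurable_id.pow_const r).aestronglyMeasurable).symm
        _ = ∫ x, x ^ r ∂(Measure.map (fun ω => ∑ i, R ω i * Y i ω) μ) := by rw [hSeq]
        _ = _ := integral_map hSY.aemeasurable
              (measurable_id.pow_const r).aestronglyMeasurable
    rw [aux_expansion hn R hRmeas hR01 X hXmeas hXindep hXiid hXbdd hRX r,
        aux_expansion hn R hRmeas hR01 Y hYmeas hYindep hYiid hYbdd hRY r] at hE
    set c : (Fin r → Fin n) → ℝ := fun f => ∫ ω, ∏ j, R ω (f j) ∂μ with hc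
    set PX : (Fin r → Fin n) → ℝ := fun f =>
      ∏ i, ∫ ω, X ⟨0, hn⟩ ω ^ (Finset.univ.filter (fun j => f j = i)).card ∂μ with hPX
    set PY : (Fin r → Fin n) → ℝ := fun f =>
      ∏ i, ∫ ω, Y ⟨0, hn⟩ ω ^ (Finset.univ.filter (fun j => f j = i)).card ∂μ with hPY
    have hdiff : ∑ f : Fin r → Fin n, c f * (PX f - PY f) = 0 := by
      simp_rw [mul_sub]
      rw [Finset.sum_sub_distrib, hE, sub_self]
    have hvanish : ∀ f : Fin r → Fin n, ¬ (∃ i, ∀ j, f j = i) → PX f - PY f = 0 := by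
      intro f hf
      rw [sub_eq_zero]
      refine Finset.prod_congr rfl fun i _ => ?_
      have hle : (Finset.univ.filter (fun j => f j = i)).card ≤ r := by
        calc (Finset.univ.filter (fun j => f j = i)).card
            ≤ (Finset.univ : Finset (Fin r)).card := Finset.card_filter_le _ _
          _ = r := by simp
      rcases lt_or_eq_of_le hle with h | h
      · exact ih _ h
      · exfalso
        have huniv : Finset.univ.filter (fun j => f j = i) = Finset.univ :=
          Finset.eq_univ_of_card _ (by rw [h]; simp)
        refine hf ⟨i, fun j => ?_⟩
        have hj : j ∈ Finset.univ.filter (fun j => f j = i) := huniv.symm ▸ Finset.mem_univ j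
        exact (Finset.mem_filter.1 hj).2
    have hfilter : ∑ f ∈ Finset.univ.filter (fun f : Fin r → Fin n => ∃ i, ∀ j, f j = i),
        c f * (PX f - PY f) = 0 := by
      rw [Finset.sum_filter_of_ne, hdiff]
      intro f _ hne
      by_contra hp
      exact hne (by rw [hvanish f hp, mul_zero])
    have hconstval : ∀ f ∈ Finset.univ.filter (fun f : Fin r → Fin n => ∃ i, ∀ j, f j = i),
        PX f - PY f = (∫ ω, X ⟨0, hn⟩ ω ^ r ∂μ) - ∫ ω, Y ⟨0, hn⟩ ω ^ r ∂μ := by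
      intro f hf
      obtain ⟨i, hi⟩ := (Finset.mem_filter.1 hf).2
      have hcard : ∀ i', (Finset.univ.filter (fun j => f j = i')).card
          = if i' = i then r else 0 := by
        intro i'
        by_cases h : i' = i
        · subst h
          rw [if_pos rfl, Finset.filter_true_of_mem (fun j _ => hi j)]
          simp
        · rw [if_neg h, Finset.card_eq_zero, Finset.filter_eq_empty_iff]
          intro j _
          rw [hi j]
          exact fun hh => h hh.symm
      have hPXv : PX f = ∫ ω, X ⟨0, hn⟩ ω ^ r ∂μ := by
        calc PX f = ∫ ω, X ⟨0, hn⟩ ω ^ (Finset.univ.filter (fun j => f j = i)).card ∂μ :=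
              Finset.prod_eq_single i (fun b _ hb => by rw [hcard b, if_neg hb]; simp)
                (fun h => absurd (Finset.mem_univ i) h)
          _ = _ := by rw [hcard i, if_pos rfl]
      have hPYv : PY f = ∫ ω, Y ⟨0, hn⟩ ω ^ r ∂μ := by
        calc PY f = ∫ ω, Y ⟨0, hn⟩ ω ^ (Finset.univ.filter (fun j => f j = i)).card ∂μ :=
              Finset.prod_eq_single i (fun b _ hb => by rw [hcard b, if_neg hb]; simp)
                (fun h => absurd (Finset.mem_univ i) h)
          _ = _ := by rw [hcard i, if_pos rfl]
      rw [hPXv, hPYv]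
    have hfactor : ((∫ ω, X ⟨0, hn⟩ ω ^ r ∂μ) - ∫ ω, Y ⟨0, hn⟩ ω ^ r ∂μ) *
        (∑ f ∈ Finset.univ.filter (fun f : Fin r → Fin n => ∃ i, ∀ j, f j = i), c f) = 0 := by
      rw [Finset.mul_sum, ← hfilter]
      exact Finset.sum_congr rfl fun f hf => by rw [hconstval f hf]; ring
    have hpos : 0 < ∑ f ∈ Finset.univ.filter (fun f : Fin r → Fin n => ∃ i, ∀ j, f j = i), c f := by
      have hcnn : ∀ f : Fin r → Fin n, 0 ≤ c f := by
        intro f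
        refine integral_nonneg_of_ae ?_
        filter_upwards [hR01] with ω h using Finset.prod_nonneg fun j _ => (h (f j)).1
      have himg : ∑ i : Fin n, ∫ ω, R ω i ^ r ∂μ
          = ∑ f ∈ Finset.univ.image (fun (i : Fin n) (_ : Fin r) => i), c f := by
        rw [Finset.sum_image (fun a _ b _ hab => congrFun hab ⟨0, hrpos⟩)]
        refine Finset.sum_congr rfl fun i _ => ?_
        simp only [hc]
        congr 1
        funext ω
        rw [Finset.prod_const, Finset.card_univ, Fintype.card_fin]
      have hle : ∑ i : Fin n, ∫ ω, R ω i ^ r ∂μ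
          ≤ ∑ f ∈ Finset.univ.filter (fun f : Fin r → Fin n => ∃ i, ∀ j, f j = i), c f := by
        rw [himg]
        refine Finset.sum_le_sum_of_subset_of_nonneg ?_ (fun f _ _ => hcnn f)
        intro f hf
        obtain ⟨i, _, rfl⟩ := Finset.mem_image.1 hf
        exact Finset.mem_filter.2 ⟨Finset.mem_univ _, ⟨i, fun j => rfl⟩⟩
      exact lt_of_lt_of_le (aux_R_pos hn hRmeas hRae r) hle
    rcases mul_eq_zero.1 hfactor with h | h
    · exact sub_eq_zero.1 h
    · exact absurd h hpos.ne'
  intro i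
  haveI : IsProbabilityMeasure (Measure.map (X ⟨0, hn⟩) μ) :=
    Measure.isProbabilityMeasure_map (hXmeas _).aemeasurable
  haveI : IsProbabilityMeasure (Measure.map (Y ⟨0, hn⟩) μ) :=
    Measure.isProbabilityMeasure_map (hYmeas _).aemeasurable
  have h1 : Measure.map (X ⟨0, hn⟩) μ = Measure.map (Y ⟨0, hn⟩) μ := by
    refine aux_determined _ _ ?_ ?_ ?_
    · exact (ae_map_iff (hXmeas _).aemeasurable measurableSet_Icc).2 (hXbdd _)
    · exact (ae_map_iff (hYmeas _).aemeasurable measurableSet_Icc).2 (hYbdd _)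
    · intro k
      calc ∫ x, x ^ k ∂(Measure.map (X ⟨0, hn⟩) μ)
          = ∫ ω, X ⟨0, hn⟩ ω ^ k ∂μ := integral_map (hXmeas _).aemeasurable
            (measurable_id.pow_const k).aestronglyMeasurable
        _ = ∫ ω, Y ⟨0, hn⟩ ω ^ k ∂μ := hmom k
        _ = _ := (integral_map (hYmeas _).aemeasurable
            (measurable_id.pow_const k).aestronglyMeasurable).symm
  rw [hXiid i ⟨0, hn⟩, hYiid i ⟨0, hn⟩, h1]
end
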